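/- The image of a max-intersection complete code under a surjective morphism of codes is max-intersection complete. -/

import Mathlib

def trunk {n : ℕ} (C : Set (Finset (Fin n))) (σ : Finset (Fin n)) : Set (Finset (Fin n)) :=
  {c | c ∈ C ∧ σ ⊆ c}

def IsTrunk {n : ℕ} (C T : Set (Finset (Fin n))) : Prop :=
  T = ∅ ∨ ∃ σ : Finset (Fin n), T = trunk C σ

def IsMorphism {n m : ℕ} (C : Set (Finset (Fin n))) (D : Set (Finset (Fin m)))
    (f : Finset (Fin n) → Finset (Fin m)) : Prop :=
  (∀ c ∈ C, f c ∈ D) ∧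
  ∀ T : Set (Finset (Fin m)), IsTrunk D T → IsTrunk C {c | c ∈ C ∧ f c ∈ T}

def MaximalCodeword {n : ℕ} (C : Set (Finset (Fin n))) (c : Finset (Fin n)) : Prop :=
  c ∈ C ∧ ∀ c' ∈ C, c ⊆ c' → c = c'

def MaxIntersectionComplete {n : ℕ} (C : Set (Finset (Fin n))) : Prop :=
  ∀ M : Finset (Finset (Fin n)), M.Nonempty →
    (∀ c ∈ M, MaximalCodeword C c) → M.inf id ∈ C

/-- Morphisms are monotone on codewords. -/
lemma morphism_mono {n m : ℕ} {C : Set (Finset (Fin n))} {D : Set (Finset (Fin m))}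
    {f : Finset (Fin n) → Finset (Fin m)} (hf : IsMorphism C D f)
    {c₁ c₂ : Finset (Fin n)} (h₁ : c₁ ∈ C) (h₂ : c₂ ∈ C) (hsub : c₁ ⊆ c₂) :
    f c₁ ⊆ f c₂ := by
  intro i hi
  have hT : IsTrunk D (trunk D {i}) := Or.inr ⟨{i}, rfl⟩
  have hS := hf.2 _ hT
  have hc₁ : c₁ ∈ {c | c ∈ C ∧ f c ∈ trunk D {i}} :=
    ⟨h₁, hf.1 _ h₁, by simpa using hi⟩
  rcases hS with hS | ⟨σ, hσ⟩
  · rw [hS] at hc₁; exact absurd hc₁ (Set.notMem_empty _)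
  · rw [hσ] at hc₁
    have hc₂ : c₂ ∈ trunk C σ := ⟨h₂, hc₁.2.trans hsub⟩
    rw [← hσ] at hc₂
    simpa using hc₂.2.2

/-- Every codeword extends to a maximal codeword. -/
lemma exists_maximal_ext {n : ℕ} {C : Set (Finset (Fin n))} {c : Finset (Fin n)}
    (hc : c ∈ C) : ∃ c', MaximalCodeword C c' ∧ c ⊆ c' := by
  obtain ⟨a, ⟨haC, hca⟩, hmax⟩ :=
    Set.Finite.exists_maximalFor id {x | x ∈ C ∧ c ⊆ x} (Set.toFinite _) ⟨c, hc, subset_rfl⟩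
  refine ⟨a, ⟨haC, fun c' hc' hsub => ?_⟩, hca⟩
  exact Finset.Subset.antisymm hsub (hmax ⟨hc', hca.trans hsub⟩ hsub)

theorem image_maxIntersectionComplete {n m : ℕ} (C : Set (Finset (Fin n)))
    (D : Set (Finset (Fin m))) (f : Finset (Fin n) → Finset (Fin m))
    (hf : IsMorphism C D f) (hsurj : ∀ d ∈ D, ∃ c ∈ C, f c = d)
    (hC : MaxIntersectionComplete C) : MaxIntersectionComplete D := by
  intro M hM hMmax
  -- choose for each d ∈ M a maximal codeword of C mapping to d
  have hchoice : ∀ d, d ∈ M → ∃ c, MaximalCodeword C c ∧ f c = d := by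
    intro d hd
    obtain ⟨c, hcC, hfc⟩ := hsurj d (hMmax d hd).1
    obtain ⟨c', hc'max, hcc'⟩ := exists_maximal_ext hcC
    refine ⟨c', hc'max, ?_⟩
    have : d ⊆ f c' := hfc ▸ morphism_mono hf hcC hc'max.1 hcc'
    exact ((hMmax d hd).2 (f c') (hf.1 _ hc'max.1) this).symm
  classical
  set g : Finset (Fin m) → Finset (Fin n) := fun d =>
    if h : d ∈ M then (hchoice d h).choose else ∅ with hg
  have hgmax : ∀ d ∈ M, MaximalCodeword C (g d) := by
    intro d hd; simp only [hg, dif_pos hd]; exact (hchoice d hd).choose_spec.1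
  have hgf : ∀ d ∈ M, f (g d) = d := by
    intro d hd; simp only [hg, dif_pos hd]; exact (hchoice d hd).choose_spec.2
  set M' : Finset (Finset (Fin n)) := M.image g with hM'
  have hM'ne : M'.Nonempty := hM.image g
  have hM'max : ∀ c ∈ M', MaximalCodeword C c := by
    intro c hc
    obtain ⟨d, hd, rfl⟩ := Finset.mem_image.1 hc
    exact hgmax d hd
  have hstar : M'.inf id ∈ C := hC M' hM'ne hM'max
  have hsub : ∀ d ∈ M, M'.inf id ⊆ g d := by
    intro d hd
    exact (Finset.inf_le (Finset.mem_image_of_mem g hd) : M'.inf id ≤ id (g d))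
  -- f (M'.inf id) = M.inf id
  have hkey : f (M'.inf id) = M.inf id := by
    apply Finset.Subset.antisymm
    · have : f (M'.inf id) ≤ M.inf id := Finset.le_inf fun d hd => by
        have := morphism_mono hf hstar (hgmax d hd).1 (hsub d hd)
        simpa [hgf d hd] using this
      exact this
    · intro i hi
      have hT : IsTrunk D (trunk D {i}) := Or.inr ⟨{i}, rfl⟩
      have hS := hf.2 _ hT
      obtain ⟨d₀, hd₀⟩ := hM
      have hmemS : ∀ d ∈ M, g d ∈ {c | c ∈ C ∧ f c ∈ trunk D {i}} := by
        intro d hd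
        refine ⟨(hgmax d hd).1, hf.1 _ (hgmax d hd).1, ?_⟩
        have : i ∈ d := (Finset.inf_le hd : M.inf id ≤ id d) hi
        simpa [hgf d hd] using this
      rcases hS with hS | ⟨σ, hσ⟩
      · rw [hS] at hmemS; exact absurd (hmemS d₀ hd₀) (Set.notMem_empty _)
      · rw [hσ] at hmemS
        have hσsub : σ ⊆ M'.inf id := by
          have : σ ≤ M'.inf id := Finset.le_inf fun c hc => by
            obtain ⟨d, hd, rfl⟩ := Finset.mem_image.1 hc
            exact (hmemS d hd).2
          exact this
        have : M'.inf id ∈ trunk C σ := ⟨hstar, hσsub⟩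
        rw [← hσ] at this
        simpa using this.2.2
  rw [← hkey]
  exact hf.1 _ hstar
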